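/- If P ⊆ ℕ is a Σ⁰₂ set, then there is a computable function i ↦ Yᵢ assigning to each i ∈ ℕ a finite set Yᵢ ⊆ {0, …, i} (given by canonical indices) such that: (a) every b ∈ P belongs to Yᵢ for all but finitely many i, and (b) Yᵢ ⊆ P for infinitely many i. -/

import Mathlib

open Filter


namespace Stmt8Aux

variable {α : Type*} [Primcodable α]

/-- Bounded search: least `k ≤ s` with `p a k = true`, else `s+1`. -/
def bfind (p : α → ℕ → Bool) (a : α) (s : ℕ) : ℕ :=
  Nat.rec (motive := fun _ => ℕ) (cond (p a 0) 0 1)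
    (fun y IH => cond (decide (IH ≤ y)) IH (cond (p a (y + 1)) (y + 1) (y + 2))) s

theorem bfind_zero (p : α → ℕ → Bool) (a : α) : bfind p a 0 = cond (p a 0) 0 1 := rfl

theorem bfind_succ (p : α → ℕ → Bool) (a : α) (s : ℕ) :
    bfind p a (s + 1) = cond (decide (bfind p a s ≤ s)) (bfind p a s)
      (cond (p a (s + 1)) (s + 1) (s + 2)) := rfl

theorem bfind_computable {p : α → ℕ → Bool} (hp : Computable₂ p) :
    Computable₂ (bfind p) := by
  have hle : Computable₂ fun a b : ℕ => decide (a ≤ b) := Primrec.nat_le.decide.to_comp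
  have h1 : Computable fun x : α × ℕ => (cond (p x.1 0) 0 1 : ℕ) :=
    Computable.cond (hp.comp Computable.fst (Computable.const 0))
      (Computable.const 0) (Computable.const 1)
  have h2 : Computable₂ fun (x : α × ℕ) (yIH : ℕ × ℕ) =>
      (cond (decide (yIH.2 ≤ yIH.1)) yIH.2
        (cond (p x.1 (yIH.1 + 1)) (yIH.1 + 1) (yIH.1 + 2)) : ℕ) := by
    exact Computable.cond
      (hle.comp (Computable.snd.comp Computable.snd) (Computable.fst.comp Computable.snd))
      (Computable.snd.comp Computable.snd)
      (Computable.cond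
        (hp.comp (Computable.fst.comp Computable.fst)
          (Computable.succ.comp (Computable.fst.comp Computable.snd)))
        (Computable.succ.comp (Computable.fst.comp Computable.snd))
        (Computable.succ.comp (Computable.succ.comp (Computable.fst.comp Computable.snd))))
  exact (Computable.nat_rec Computable.snd h1 h2).of_eq fun x => rfl

theorem bfind_le_succ (p : α → ℕ → Bool) (a : α) : ∀ s, bfind p a s ≤ s + 1 := by
  intro s
  induction s with
  | zero => rw [bfind_zero]; cases p a 0 <;> simp
  | succ s ih =>
    rw [bfind_succ]
    by_cases h : bfind p a s ≤ s
    · simp [h]; omega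
    · simp [h]; cases p a (s + 1) <;> simp

theorem bfind_lt (p : α → ℕ → Bool) (a : α) :
    ∀ s k, k < bfind p a s → p a k = false := by
  intro s
  induction s with
  | zero =>
    intro k hk
    rw [bfind_zero] at hk
    cases h : p a 0 <;> rw [h] at hk
    · simp at hk
      have hk0 : k = 0 := by omega
      rw [hk0]; exact h
    · simp at hk
  | succ s ih =>
    intro k hk
    rw [bfind_succ] at hk
    by_cases h : bfind p a s ≤ s
    · simp [h] at hk; exact ih k hk
    · have hbs : bfind p a s = s + 1 := by
        have := bfind_le_succ p a s; omega
      simp [h] at hk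
      cases h1 : p a (s + 1) <;> rw [h1] at hk <;> simp at hk
      · rcases Nat.lt_succ_iff_lt_or_eq.mp (by omega : k < s + 2) with h2 | h2
        · exact ih k (by omega)
        · rw [h2]; exact h1
      · exact ih k (by omega)

theorem bfind_eq_true (p : α → ℕ → Bool) (a : α) :
    ∀ s, bfind p a s ≤ s → p a (bfind p a s) = true := by
  intro s
  induction s with
  | zero =>
    intro hs
    cases h : p a 0
    · simp [bfind_zero, h] at hs
    · simp [bfind_zero, h]
  | succ s ih =>
    intro hs
    rw [bfind_succ] at hs ⊢
    by_cases h : bfind p a s ≤ s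
    · simp [h] at hs ⊢; exact ih h
    · simp [h] at hs ⊢
      cases h1 : p a (s + 1)
      · simp [h1] at hs
      · simp [h1]

theorem bfind_le (p : α → ℕ → Bool) (a : α) {k s : ℕ}
    (hk : p a k = true) (h : k ≤ s) : bfind p a s ≤ k := by
  by_contra hc
  have := bfind_lt p a s k (by omega)
  rw [hk] at this; exact Bool.noConfusion this

theorem bfind_stable (p : α → ℕ → Bool) (a : α) {s t : ℕ}
    (h : bfind p a s ≤ s) (hst : s ≤ t) : bfind p a t = bfind p a s := by
  have h1 : bfind p a t ≤ bfind p a s :=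
    bfind_le p a (bfind_eq_true p a s h) (le_trans h hst)
  have h2 : bfind p a t ≤ t := le_trans h1 (le_trans h hst)
  have h3 : bfind p a s ≤ bfind p a t :=
    bfind_le p a (bfind_eq_true p a t h2) (le_trans h1 h)
  omega

end Stmt8Aux

namespace Stmt8Aux

variable (f : ℕ × ℕ × ℕ → Bool)

/-- `kt f (n,a) s` = least `b ≤ s` with `f (n,a,b) = false`, else `s+1`
(time at which the pair `(n,a)` is seen to be killed). -/
def kt (na : ℕ × ℕ) (s : ℕ) : ℕ := bfind (fun na b => !f (na.1, na.2, b)) na s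

/-- `mu f s n` = least `a ≤ s` such that `(n,a)` is not killed by stage `s`, else `s+1`. -/
def mu (s n : ℕ) : ℕ := bfind (fun ns a => decide (ns.2 < kt f (ns.1, a) ns.2)) (n, s) s

/-- the pair coded by `c` has its kill discovered exactly at stage `s`. -/
def contrib (c s : ℕ) : Bool :=
  cond (decide (kt f c.unpair s ≤ s))
    (decide (max (max c.unpair.1 c.unpair.2) (kt f c.unpair s) = s)) false

def mAux (s k : ℕ) : ℕ :=
  Nat.rec (motive := fun _ => ℕ) (cond (contrib f 0 s) 0 s)
    (fun y IH => min IH (cond (contrib f (y + 1) s) (y + 1) s)) k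

/-- `mm f s` = the least code whose kill is discovered at stage `s` (capped at `s`). -/
def mm (s : ℕ) : ℕ := mAux f s (Nat.pair s s)

/-- membership criterion for `Y s`. -/
def qq (n s : ℕ) : Bool :=
  cond (decide (mu f s n ≤ s)) (decide (Nat.pair n (mu f s n) < mm f s)) false

def Yl (s k : ℕ) : List ℕ :=
  Nat.rec (motive := fun _ => List ℕ) [] (fun y IH => IH ++ cond (qq f y s) [y] []) k

def Ylist (s : ℕ) : List ℕ := Yl f s (s + 1)

section Computability

open Computable

variable {f}

theorem kt_computable (hf : Computable f) : Computable₂ (kt f) := by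
  apply bfind_computable
  exact Primrec.not.to_comp.comp
    (hf.comp (Computable.pair (fst.comp fst) (Computable.pair (snd.comp fst) snd)))

theorem mu_computable (hf : Computable f) : Computable₂ (mu f) := by
  have hlt : Computable₂ fun a b : ℕ => decide (a < b) := Primrec.nat_lt.decide.to_comp
  have h1 : Computable₂ fun (ns : ℕ × ℕ) (a : ℕ) => decide (ns.2 < kt f (ns.1, a) ns.2) :=
    hlt.comp (snd.comp fst)
      (((kt_computable hf).comp (Computable.pair (fst.comp fst) snd) (snd.comp fst)))
  exact (bfind_computable h1).comp (Computable.pair snd fst) fst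

theorem contrib_computable (hf : Computable f) : Computable₂ (contrib f) := by
  have hle : Computable₂ fun a b : ℕ => decide (a ≤ b) := Primrec.nat_le.decide.to_comp
  have heq : Computable₂ fun a b : ℕ => decide (a = b) := Primrec.eq.decide.to_comp
  have hmax : Computable₂ (max : ℕ → ℕ → ℕ) := Primrec.nat_max.to_comp
  have hu : Computable fun p : ℕ × ℕ => p.1.unpair := Computable.unpair.comp fst
  have hktt : Computable fun p : ℕ × ℕ => kt f p.1.unpair p.2 :=
    (kt_computable hf).comp hu snd
  exact Computable.cond (hle.comp hktt snd)
    (heq.comp (hmax.comp (hmax.comp (fst.comp hu) (snd.comp hu)) hktt) snd)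
    (const false)

theorem mAux_computable (hf : Computable f) : Computable₂ (mAux f) := by
  have hg : Computable fun p : ℕ × ℕ => (cond (contrib f 0 p.1) 0 p.1 : ℕ) :=
    Computable.cond ((contrib_computable hf).comp (const 0) fst) (const 0) fst
  have hh : Computable₂ fun (p : ℕ × ℕ) (yIH : ℕ × ℕ) =>
      min yIH.2 (cond (contrib f (yIH.1 + 1) p.1) (yIH.1 + 1) p.1) := by
    exact Primrec.nat_min.to_comp.comp (snd.comp snd)
      (Computable.cond
        ((contrib_computable hf).comp (succ.comp (fst.comp snd)) (fst.comp fst))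
        (succ.comp (fst.comp snd)) (fst.comp fst))
  exact (Computable.nat_rec snd hg hh).of_eq fun p => rfl

theorem mm_computable (hf : Computable f) : Computable (mm f) :=
  (mAux_computable hf).comp Computable.id
    (Primrec₂.natPair.to_comp.comp Computable.id Computable.id)

theorem qq_computable (hf : Computable f) : Computable₂ (qq f) := by
  have hle : Computable₂ fun a b : ℕ => decide (a ≤ b) := Primrec.nat_le.decide.to_comp
  have hlt : Computable₂ fun a b : ℕ => decide (a < b) := Primrec.nat_lt.decide.to_comp
  have hmuterm : Computable fun p : ℕ × ℕ => mu f p.2 p.1 :=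
    (mu_computable hf).comp snd fst
  exact Computable.cond (hle.comp hmuterm snd)
    (hlt.comp (Primrec₂.natPair.to_comp.comp fst hmuterm) ((mm_computable hf).comp snd))
    (const false)

theorem Yl_computable (hf : Computable f) : Computable₂ (Yl f) := by
  have hsingle : Computable fun n : ℕ => [n] := list_cons.comp Computable.id (const [])
  have hh : Computable₂ fun (p : ℕ × ℕ) (yIH : ℕ × List ℕ) =>
      yIH.2 ++ cond (qq f yIH.1 p.1) [yIH.1] [] := by
    exact list_append.comp (snd.comp snd)
      (Computable.cond ((qq_computable hf).comp (fst.comp snd) (fst.comp fst))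
        (hsingle.comp (fst.comp snd)) (const []))
  exact (Computable.nat_rec snd (const []) hh).of_eq fun p => rfl

theorem Ylist_computable (hf : Computable f) : Computable (Ylist f) :=
  (Yl_computable hf).comp Computable.id succ

end Computability

end Stmt8Aux

namespace Stmt8Aux

variable (f : ℕ × ℕ × ℕ → Bool)

/-! ### Specifications -/

theorem kt_le_s {na : ℕ × ℕ} {s : ℕ} (h : kt f na s ≤ s) :
    f (na.1, na.2, kt f na s) = false := by
  have h' : bfind (fun (na : ℕ × ℕ) (b : ℕ) => !f (na.1, na.2, b)) na s ≤ s := h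
  have := bfind_eq_true _ na s h'
  simpa [kt] using this

theorem kt_le_of {na : ℕ × ℕ} {b s : ℕ} (hb : f (na.1, na.2, b) = false) (hbs : b ≤ s) :
    kt f na s ≤ b :=
  bfind_le _ _ (by simp [hb]) hbs

theorem mu_spec {s n : ℕ} (h : mu f s n ≤ s) : s < kt f (n, mu f s n) s := by
  have h' : bfind (fun (ns : ℕ × ℕ) (a : ℕ) => decide (ns.2 < kt f (ns.1, a) ns.2)) (n, s) s ≤ s := h
  have := bfind_eq_true _ (n, s) s h'
  simpa [mu] using this

theorem mu_le {s n a : ℕ} (ha : a ≤ s) (h : s < kt f (n, a) s) : mu f s n ≤ a :=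
  bfind_le _ _ (by simpa using h) ha

theorem contrib_iff {c s : ℕ} : contrib f c s = true ↔
    kt f c.unpair s ≤ s ∧ max (max c.unpair.1 c.unpair.2) (kt f c.unpair s) = s := by
  by_cases h : kt f c.unpair s ≤ s <;> simp [contrib, h]

theorem mAux_le (s k : ℕ) : mAux f s k ≤ s := by
  induction k with
  | zero => simp only [mAux]; cases contrib f 0 s <;> simp
  | succ k ih =>
    have : mAux f s (k + 1) = min (mAux f s k) (cond (contrib f (k + 1) s) (k + 1) s) := rfl
    rw [this]
    exact le_trans (min_le_left _ _) ih

theorem mm_le (s : ℕ) : mm f s ≤ s := mAux_le f s _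

theorem mAux_le_of_contrib {s k c : ℕ} (hck : c ≤ k) (h : contrib f c s = true) :
    mAux f s k ≤ c := by
  induction k with
  | zero =>
    have hc : c = 0 := by omega
    subst hc
    have hrec : mAux f s 0 = cond (contrib f 0 s) 0 s := rfl
    rw [hrec, h]
    simp
  | succ k ih =>
    have hrec : mAux f s (k + 1) = min (mAux f s k) (cond (contrib f (k + 1) s) (k + 1) s) := rfl
    rcases Nat.lt_succ_iff_lt_or_eq.mp (by omega : c < k + 2) with h1 | h1
    · exact le_trans (hrec ▸ min_le_left _ _) (ih (by omega))
    · subst h1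
      rw [hrec, h]
      exact min_le_right _ _

theorem mm_le_of_contrib {s c : ℕ} (hck : c ≤ Nat.pair s s) (h : contrib f c s = true) :
    mm f s ≤ c :=
  mAux_le_of_contrib f hck h

theorem mAux_cases (s k : ℕ) : mAux f s k = s ∨ ∃ c, contrib f c s = true ∧ mAux f s k = c := by
  induction k with
  | zero =>
    cases h : contrib f 0 s
    · left; simp [mAux, h]
    · right; exact ⟨0, h, by simp [mAux, h]⟩
  | succ k ih =>
    have hrec : mAux f s (k + 1) = min (mAux f s k) (cond (contrib f (k + 1) s) (k + 1) s) := rfl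
    rcases le_total (mAux f s k) (cond (contrib f (k + 1) s) (k + 1) s) with h | h
    · rw [hrec, min_eq_left h]; exact ih
    · rw [hrec, min_eq_right h]
      cases hc : contrib f (k + 1) s
      · left; simp [hc]
      · right; exact ⟨k + 1, hc, by simp [hc]⟩

theorem mm_cases (s : ℕ) : mm f s = s ∨ ∃ c, contrib f c s = true ∧ mm f s = c :=
  mAux_cases f s _

theorem qq_iff {n s : ℕ} : qq f n s = true ↔
    mu f s n ≤ s ∧ Nat.pair n (mu f s n) < mm f s := by
  by_cases h : mu f s n ≤ s <;> simp [qq, h]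

theorem mem_Yl {s k n : ℕ} : n ∈ Yl f s k ↔ n < k ∧ qq f n s = true := by
  induction k with
  | zero => simp [Yl]
  | succ k ih =>
    have hrec : Yl f s (k + 1) = Yl f s k ++ cond (qq f k s) [k] [] := rfl
    rw [hrec, List.mem_append, ih]
    cases h : qq f k s
    · simp only [cond_false, List.not_mem_nil, or_false]
      constructor
      · rintro ⟨h1, h2⟩; exact ⟨by omega, h2⟩
      · rintro ⟨h1, h2⟩
        refine ⟨?_, h2⟩
        rcases Nat.lt_succ_iff_lt_or_eq.mp h1 with h3 | h3
        · exact h3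
        · subst h3; rw [h2] at h; exact Bool.noConfusion h
    · simp only [cond_true, List.mem_singleton]
      constructor
      · rintro (⟨h1, h2⟩ | h1)
        · exact ⟨by omega, h2⟩
        · subst h1; exact ⟨by omega, h⟩
      · rintro ⟨h1, h2⟩
        rcases Nat.lt_succ_iff_lt_or_eq.mp h1 with h3 | h3
        · exact Or.inl ⟨h3, h2⟩
        · exact Or.inr h3

theorem mem_Ylist {s n : ℕ} : n ∈ Ylist f s ↔ n < s + 1 ∧ qq f n s = true := mem_Yl f

/-! ### The function `mm` tends to infinity -/

theorem mm_tendsto (C : ℕ) : ∃ S, ∀ s, S ≤ s → C < mm f s := by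
  classical
  set Dk : ℕ → ℕ := fun c =>
    if h : ∃ b, f (c.unpair.1, c.unpair.2, b) = false then
      max (max c.unpair.1 c.unpair.2) (Nat.find h) else 0 with hDk
  refine ⟨max (C + 1) ((Finset.range (C + 1)).sup Dk + 1), fun s hs => ?_⟩
  have hs1 : C + 1 ≤ s := le_trans (le_max_left _ _) hs
  have hs2 : (Finset.range (C + 1)).sup Dk + 1 ≤ s := le_trans (le_max_right _ _) hs
  rcases mm_cases f s with h | ⟨c, hc, hm⟩
  · omega
  · rw [contrib_iff] at hc
    obtain ⟨h1, h2⟩ := hc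
    by_contra hC
    have hcC : c < C + 1 := by omega
    have hd : ∃ b, f (c.unpair.1, c.unpair.2, b) = false :=
      ⟨kt f c.unpair s, kt_le_s f h1⟩
    have h3 : Nat.find hd ≤ kt f c.unpair s := Nat.find_min' hd (kt_le_s f h1)
    have h4 : kt f c.unpair s ≤ Nat.find hd :=
      kt_le_of f (Nat.find_spec hd) (le_trans h3 h1)
    have h5 : Dk c = s := by
      rw [hDk]
      simp only [dif_pos hd]
      rw [← le_antisymm h4 h3]
      exact h2
    have h6 : Dk c ≤ (Finset.range (C + 1)).sup Dk :=
      Finset.le_sup (Finset.mem_range.mpr hcC)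
    omega

/-! ### Nondeficiency stages -/

theorem nondef (S : ℕ) : ∃ s, S ≤ s ∧ ∀ t, s < t → mm f s < mm f t := by
  classical
  have hex : ∃ v, ∃ t, S ≤ t ∧ mm f t = v := ⟨mm f S, S, le_rfl, rfl⟩
  set v := Nat.find hex with hv
  obtain ⟨t0, ht0S, ht0⟩ := Nat.find_spec hex
  have hvle : ∀ t, S ≤ t → v ≤ mm f t := fun t ht => Nat.find_min' hex ⟨t, ht, rfl⟩
  obtain ⟨S', hS'⟩ := mm_tendsto f v
  have ht0S' : t0 < S' := by
    by_contra h
    have := hS' t0 (by omega)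
    omega
  set Pp : ℕ → Prop := fun t => S ≤ t ∧ mm f t = v with hPp
  letI : DecidablePred Pp := Classical.decPred _
  have hs : Pp (Nat.findGreatest Pp S') :=
    Nat.findGreatest_spec (m := t0) (le_of_lt ht0S') (⟨ht0S, ht0⟩ : Pp t0)
  refine ⟨Nat.findGreatest Pp S', hs.1, fun t ht => ?_⟩
  rw [hs.2]
  by_cases htS' : t ≤ S'
  · have hnp : ¬ Pp t := Nat.findGreatest_is_greatest ht htS'
    have h1 : v ≤ mm f t := hvle t (le_trans hs.1 (le_of_lt ht))
    have h2 : mm f t ≠ v := fun h => hnp ⟨le_trans hs.1 (le_of_lt ht), h⟩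
    omega
  · exact hS' t (by omega)

/-! ### Monotonicity of pairing -/

theorem pair_le_pair {n a t : ℕ} (h1 : n ≤ t) (h2 : a ≤ t) :
    Nat.pair n a ≤ Nat.pair t t := by
  have hmul1 : n * n ≤ t * t := Nat.mul_le_mul h1 h1
  have hmul2 : a * a ≤ t * t := Nat.mul_le_mul h2 h2
  unfold Nat.pair
  split_ifs <;> nlinarith [hmul1, hmul2, h1, h2]

/-! ### Cofinite membership for true elements -/

theorem qq_eventually {n : ℕ} (hn : ∃ a, ∀ b, f (n, a, b) = true) :
    ∃ S, ∀ s, S ≤ s → n < s + 1 ∧ qq f n s = true := by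
  classical
  set a0 := Nat.find hn with ha0def
  have ha0 : ∀ b, f (n, a0, b) = true := Nat.find_spec hn
  set B : ℕ → ℕ := fun a =>
    if h : ∃ b, f (n, a, b) = false then Nat.find h else 0 with hB
  set S1 := (Finset.range a0).sup B with hS1
  obtain ⟨S2, hS2⟩ := mm_tendsto f (Nat.pair n a0)
  refine ⟨max (max a0 S1) (max S2 n), fun s hs => ?_⟩
  have hsa0 : a0 ≤ s := le_trans (le_trans (le_max_left _ _) (le_max_left _ _)) hs
  have hsS1 : S1 ≤ s := le_trans (le_trans (le_max_right _ _) (le_max_left _ _)) hs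
  have hsS2 : S2 ≤ s := le_trans (le_trans (le_max_left _ _) (le_max_right _ _)) hs
  have hsn : n ≤ s := le_trans (le_trans (le_max_right _ _) (le_max_right _ _)) hs
  have hkt0 : s < kt f (n, a0) s := by
    by_contra h
    have h' : kt f (n, a0) s ≤ s := by omega
    have := kt_le_s f h'
    rw [ha0 _] at this
    exact Bool.noConfusion this
  have hmu_le : mu f s n ≤ a0 := mu_le f hsa0 hkt0
  have hmu_ge : a0 ≤ mu f s n := by
    by_contra h
    push_neg at h
    have h1 : mu f s n ≤ s := by omega
    have h2 : s < kt f (n, mu f s n) s := mu_spec f h1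
    have h3 : ∃ b, f (n, mu f s n, b) = false := by
      have := Nat.find_min hn h
      push_neg at this
      obtain ⟨b, hb⟩ := this
      exact ⟨b, by simpa using hb⟩
    have h4 : B (mu f s n) = Nat.find h3 := by rw [hB]; simp only [dif_pos h3]
    have h5 : B (mu f s n) ≤ S1 := Finset.le_sup (Finset.mem_range.mpr h)
    have h6 : kt f (n, mu f s n) s ≤ Nat.find h3 :=
      kt_le_of f (Nat.find_spec h3) (by omega)
    omega
  have hmu : mu f s n = a0 := le_antisymm hmu_le hmu_ge
  refine ⟨by omega, ?_⟩
  rw [qq_iff]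
  rw [hmu]
  exact ⟨hsa0, hS2 s hsS2⟩

/-! ### At nondeficiency stages, `Y s ⊆ P` -/

theorem qq_good {s : ℕ} (hnd : ∀ t, s < t → mm f s < mm f t) {n : ℕ}
    (h : qq f n s = true) : ∀ b, f (n, mu f s n, b) = true := by
  classical
  rw [qq_iff] at h
  obtain ⟨h1, h2⟩ := h
  have hkt : s < kt f (n, mu f s n) s := mu_spec f h1
  by_contra hbad
  push_neg at hbad
  obtain ⟨b, hb⟩ := hbad
  have hd : ∃ b, f (n, mu f s n, b) = false := ⟨b, by simpa using hb⟩
  set a := mu f s n with ha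
  set b0 := Nat.find hd with hb0
  set t := max (max n a) b0 with ht
  by_cases hts : t ≤ s
  · have : kt f (n, a) s ≤ b0 :=
      kt_le_of f (Nat.find_spec hd) (le_trans (le_max_right _ _) hts)
    omega
  · push_neg at hts
    have hb0t : b0 ≤ t := le_max_right _ _
    have hktt : kt f (n, a) t ≤ b0 := kt_le_of f (Nat.find_spec hd) hb0t
    have hfind : b0 ≤ kt f (n, a) t := Nat.find_min' hd (kt_le_s f (le_trans hktt hb0t))
    have hkt_eq : kt f (n, a) t = b0 := le_antisymm hktt hfind
    have hcontrib : contrib f (Nat.pair n a) t = true := by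
      rw [contrib_iff, Nat.unpair_pair]
      exact ⟨by rw [hkt_eq]; exact hb0t, by rw [hkt_eq]⟩
    have hple : Nat.pair n a ≤ Nat.pair t t :=
      pair_le_pair (le_trans (le_max_left _ _) (le_max_left _ _))
        (le_trans (le_max_right _ _) (le_max_left _ _))
    have hmmle : mm f t ≤ Nat.pair n a := mm_le_of_contrib f hple hcontrib
    have := hnd t hts
    omega

end Stmt8Aux


/-- A set `P ⊆ ℕ` is `Σ⁰₂` if there is a computable relation `R ⊆ ℕ³` such that
`n ∈ P ↔ ∃ a ∀ b, R n a b`. -/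
def Sigma02 (P : Set ℕ) : Prop :=
  ∃ R : ℕ → ℕ → ℕ → Prop,
    ComputablePred (fun t : ℕ × ℕ × ℕ => R t.1 t.2.1 t.2.2) ∧
    ∀ n : ℕ, n ∈ P ↔ ∃ a : ℕ, ∀ b : ℕ, R n a b

/-- A function assigning finite sets to numbers is computable if it is induced by a
computable function returning (codes of) lists. -/
def ComputableFinsetFun (Y : ℕ → Finset ℕ) : Prop :=
  ∃ f : ℕ → List ℕ, Computable f ∧ ∀ i : ℕ, (f i).toFinset = Y i

/-- If `P ⊆ ℕ` is `Σ⁰₂`, then there is a computable assignment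
`i ↦ Y i` of finite sets `Y i ⊆ {0, …, i}` such that every `b ∈ P` belongs to `Y i`
for all but finitely many `i`, and `Y i ⊆ P` for infinitely many `i`. -/
theorem stmt8 (P : Set ℕ) (hP : Sigma02 P) :
    ∃ Y : ℕ → Finset ℕ, ComputableFinsetFun Y ∧
      (∀ i : ℕ, ∀ x ∈ Y i, x ≤ i) ∧
      (∀ b ∈ P, ∀ᶠ i in atTop, b ∈ Y i) ∧
      (∃ᶠ i in atTop, ↑(Y i) ⊆ P) := by
  obtain ⟨R, hRc, hPR⟩ := hP
  obtain ⟨f, hfc, hfR⟩ := ComputablePred.computable_iff.mp hRc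
  have hR : ∀ n a b : ℕ, R n a b ↔ f (n, a, b) = true := by
    intro n a b
    have := congrFun hfR (n, a, b)
    simp only at this
    rw [← this]
  refine ⟨fun s => (Stmt8Aux.Ylist f s).toFinset,
    ⟨Stmt8Aux.Ylist f, Stmt8Aux.Ylist_computable hfc, fun i => rfl⟩, ?_, ?_, ?_⟩
  · intro i x hx
    rw [List.mem_toFinset, Stmt8Aux.mem_Ylist] at hx
    omega
  · intro b hb
    have hgood : ∃ a, ∀ b', f (b, a, b') = true := by
      obtain ⟨a, ha⟩ := (hPR b).mp hb
      exact ⟨a, fun b' => (hR b a b').mp (ha b')⟩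
    obtain ⟨S, hS⟩ := Stmt8Aux.qq_eventually f hgood
    rw [eventually_atTop]
    refine ⟨S, fun i hi => ?_⟩
    rw [List.mem_toFinset, Stmt8Aux.mem_Ylist]
    exact hS i hi
  · rw [frequently_atTop]
    intro S
    obtain ⟨s, hsS, hnd⟩ := Stmt8Aux.nondef f S
    refine ⟨s, hsS, ?_⟩
    intro n hn
    rw [Finset.mem_coe, List.mem_toFinset, Stmt8Aux.mem_Ylist] at hn
    have hg := Stmt8Aux.qq_good f hnd hn.2
    exact (hPR n).mpr ⟨Stmt8Aux.mu f s n, fun b => (hR n _ b).mpr (hg b)⟩
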